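/- Let G be a connected graph with terminals R = \{v_0, ..., v_\alpha\} such that each v_i (1 \le i \le \alpha - 1) is a cutvertex separating v_0 from v_\alpha. Then there exists an ordering of R such that every v_0–v_\alpha path in G visits all terminals in that same order. -/

import Mathlib

open SimpleGraph

private lemma reach_ind {V : Type*} {G : SimpleGraph V} {s : Set V} {u v : V}
    (p : G.Walk u v) (hs : ∀ x ∈ p.support, x ∈ s) (hu : u ∈ s) (hv : v ∈ s) :
    (G.induce s).Reachable ⟨u, hu⟩ ⟨v, hv⟩ := by
  induction p with
  | nil => exact Reachable.refl _
  | @cons a b c h q ih =>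
      have hb : b ∈ s := hs b (by simp)
      have hadj : (G.induce s).Adj ⟨a, hu⟩ ⟨b, hb⟩ := h
      exact hadj.reachable.trans (ih (fun x hx => hs x (by simp [hx])) hb hv)

private lemma idx_end {V : Type*} [DecidableEq V] {G : SimpleGraph V} {u v : V}
    (p : G.Walk u v) (hnd : p.support.Nodup) :
    p.support.idxOf v + 1 = p.support.length := by
  induction p with
  | nil => simp
  | @cons a b c h q ih =>
      rw [Walk.support_cons] at hnd ⊢
      obtain ⟨ha, hnd'⟩ := List.nodup_cons.mp hnd
      have hac : a ≠ c := fun e => ha (e ▸ q.end_mem_support)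
      rw [List.idxOf_cons_ne _ hac]
      have := ih hnd'
      simp only [List.length_cons]
      omega

theorem terminals_ordered_on_paths {V : Type*} [Fintype V] [DecidableEq V]
    (G : SimpleGraph V) (hG : G.Connected)
    (α : ℕ) (vs : Fin (α + 1) → V) (hinj : Function.Injective vs)
    (hsep : ∀ i : Fin (α + 1), 0 < i.val → i.val < α →
      ∀ (h0 : vs 0 ∈ {x | x ≠ vs i}) (hα : vs (Fin.last α) ∈ {x | x ≠ vs i}),
        ¬ (G.induce {x | x ≠ vs i}).Reachable ⟨vs 0, h0⟩ ⟨vs (Fin.last α), hα⟩) :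
    ∃ π : Equiv.Perm (Fin (α + 1)), π 0 = 0 ∧ π (Fin.last α) = Fin.last α ∧
      ∀ (p : G.Walk (vs 0) (vs (Fin.last α))), p.IsPath →
        ∀ i j : Fin (α + 1), i ≤ j →
          List.idxOf (vs (π i)) p.support ≤ List.idxOf (vs (π j)) p.support := by
  -- elementary facts about endpoints
  have hne0 : ∀ a : Fin (α + 1), 0 < a.val → vs 0 ≠ vs a := by
    intro a ha e
    have := congrArg Fin.val (hinj e)
    simp at this
    omega
  have hneα : ∀ a : Fin (α + 1), a.val < α → vs (Fin.last α) ≠ vs a := by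
    intro a ha e
    have := congrArg Fin.val (hinj e)
    simp [Fin.last] at this
    omega
  -- every terminal lies on every v0-vα walk
  have hmem : ∀ (q : G.Walk (vs 0) (vs (Fin.last α))) (i : Fin (α + 1)),
      vs i ∈ q.support := by
    intro q i
    by_cases h0 : i.val = 0
    · have : i = 0 := Fin.ext (by simpa using h0)
      rw [this]; exact q.start_mem_support
    by_cases hA : i.val = α
    · have : i = Fin.last α := Fin.ext (by simpa [Fin.last] using hA)
      rw [this]; exact q.end_mem_support
    by_contra hni
    have hpos : 0 < i.val := Nat.pos_of_ne_zero h0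
    have hlt : i.val < α := lt_of_le_of_ne (Nat.lt_succ_iff.mp i.isLt) hA
    have hs : ∀ x ∈ q.support, x ∈ {x | x ≠ vs i} :=
      fun x hx e => hni (e ▸ hx)
    exact hsep i hpos hlt (hne0 i hpos) (hneα i hlt)
      (reach_ind q hs (hne0 i hpos) (hneα i hlt))
  -- fix a reference path p₀
  obtain ⟨w0⟩ := hG (vs 0) (vs (Fin.last α))
  set P := w0.toPath with hP
  set p₀ : G.Walk (vs 0) (vs (Fin.last α)) := P.1 with hp₀def
  have hp₀ : p₀.IsPath := P.2
  have hnd₀ : p₀.support.Nodup := hp₀.support_nodup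
  set k : Fin (α + 1) → ℕ := fun i => List.idxOf (vs i) p₀.support with hk
  -- the key surgery lemma
  have key : ∀ a b : Fin (α + 1), 0 < a.val → a.val < α → k a < k b →
      ∀ (q : G.Walk (vs 0) (vs (Fin.last α))), q.IsPath →
        List.idxOf (vs a) q.support ≤ List.idxOf (vs b) q.support := by
    intro a b hpos hlt hab q hq
    by_contra hcon
    push_neg at hcon
    have hbq : vs b ∈ q.support := hmem q b
    have hbp : vs b ∈ p₀.support := hmem p₀ b
    set t : G.Walk (vs 0) (vs b) := q.takeUntil (vs b) hbq with ht
    set d : G.Walk (vs b) (vs (Fin.last α)) := p₀.dropUntil (vs b) hbp with hd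
    have hqs : q.support = t.support ++ (q.dropUntil (vs b) hbq).support.tail := by
      conv_lhs => rw [← q.take_spec hbq]
      rw [Walk.support_append]
    have hps : p₀.support = (p₀.takeUntil (vs b) hbp).support ++ d.support.tail := by
      conv_lhs => rw [← p₀.take_spec hbp]
      rw [Walk.support_append]
    have hndq : q.support.Nodup := hq.support_nodup
    have hndq' := hqs ▸ hndq
    obtain ⟨hndt, _, _⟩ := List.nodup_append.mp hndq'
    have hndp' := hps ▸ hnd₀
    obtain ⟨_, _, hdisj⟩ := List.nodup_append.mp hndp'
    -- vs a is not on t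
    have hat : vs a ∉ t.support := by
      intro hat
      have h1 : q.support.idxOf (vs a) = t.support.idxOf (vs a) := by
        rw [hqs]; exact List.idxOf_append_of_mem hat
      have h2 : q.support.idxOf (vs b) = t.support.idxOf (vs b) := by
        rw [hqs]; exact List.idxOf_append_of_mem t.end_mem_support
      have h3 : t.support.idxOf (vs a) < t.support.length :=
        List.idxOf_lt_length_iff.mpr hat
      have h4 := idx_end t hndt
      omega
    -- vs a is not on the tail of d
    have had : vs a ∉ d.support.tail := by
      intro had
      have hat₀ : vs a ∉ (p₀.takeUntil (vs b) hbp).support := fun h => hdisj _ h _ had rfl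
      have h1 : p₀.support.idxOf (vs a)
          = (p₀.takeUntil (vs b) hbp).support.length + d.support.tail.idxOf (vs a) := by
        rw [hps]; exact List.idxOf_append_of_notMem hat₀
      have h2 : p₀.support.idxOf (vs b)
          = (p₀.takeUntil (vs b) hbp).support.idxOf (vs b) := by
        rw [hps]; exact List.idxOf_append_of_mem (p₀.takeUntil (vs b) hbp).end_mem_support
      have h3 : (p₀.takeUntil (vs b) hbp).support.idxOf (vs b)
          < (p₀.takeUntil (vs b) hbp).support.length :=
        List.idxOf_lt_length_iff.mpr (p₀.takeUntil (vs b) hbp).end_mem_support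
      have : k a < k b := hab
      simp only [hk] at this
      omega
    -- build the forbidden walk
    set w : G.Walk (vs 0) (vs (Fin.last α)) := t.append d with hw
    have hs : ∀ x ∈ w.support, x ∈ {x | x ≠ vs a} := by
      intro x hx e
      rw [hw, Walk.support_append, List.mem_append] at hx
      subst e
      rcases hx with hx | hx
      · exact hat hx
      · exact had hx
    exact hsep a hpos hlt (hne0 a hpos) (hneα a hlt)
      (reach_ind w hs (hne0 a hpos) (hneα a hlt))
  -- sort the terminals by position on p₀
  have hkinj : Function.Injective k := by
    intro i j h
    exact hinj ((List.idxOf_inj (hmem p₀ i)).mp h)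
  set π : Equiv.Perm (Fin (α + 1)) := Tuple.sort k with hπ
  have hsm : StrictMono (k ∘ π) :=
    (Tuple.monotone_sort k).strictMono_of_injective (hkinj.comp π.injective)
  have hk0 : k 0 = 0 := by
    simp only [hk]
    rw [Walk.support_eq_cons p₀]
    exact List.idxOf_cons_self
  have hklast : ∀ i, k i ≤ k (Fin.last α) := by
    intro i
    have h1 := idx_end p₀ hnd₀
    have h2 : k i < p₀.support.length := List.idxOf_lt_length_iff.mpr (hmem p₀ i)
    simp only [hk] at h1 h2 ⊢
    omega
  have hπ0 : π 0 = 0 := by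
    by_contra h
    have hm : π (π.symm 0) = 0 := π.apply_symm_apply 0
    have hne : π.symm 0 ≠ 0 := fun e => h (by rw [e] at hm; exact hm)
    have hpos : (0 : Fin (α + 1)) < π.symm 0 := Fin.pos_iff_ne_zero.mpr hne
    have := hsm hpos
    simp only [Function.comp_apply, hm, hk0] at this
    omega
  have hπl : π (Fin.last α) = Fin.last α := by
    by_contra h
    have hm : π (π.symm (Fin.last α)) = Fin.last α := π.apply_symm_apply _
    have hne : π.symm (Fin.last α) ≠ Fin.last α :=
      fun e => h (by rw [e] at hm; exact hm)
    have hltl : π.symm (Fin.last α) < Fin.last α :=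
      lt_of_le_of_ne (Fin.le_last _) hne
    have h1 := hsm hltl
    have h2 := hklast (π (Fin.last α))
    simp only [Function.comp_apply, hm] at h1
    omega
  refine ⟨π, hπ0, hπl, ?_⟩
  intro p hp i j hij
  rcases hij.lt_or_eq with hlt | rfl
  · have hkk : k (π i) < k (π j) := hsm hlt
    by_cases h0 : π i = 0
    · rw [h0]
      have : List.idxOf (vs 0) p.support = 0 := by
        rw [Walk.support_eq_cons p]
        exact List.idxOf_cons_self
      rw [this]
      exact Nat.zero_le _
    by_cases hA : π i = Fin.last α
    · exfalso
      have := hklast (π j)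
      rw [← hA] at this
      omega
    · have hpos : 0 < (π i).val :=
        Nat.pos_of_ne_zero (fun e => h0 (Fin.ext (by simpa using e)))
      have hltα : (π i).val < α :=
        lt_of_le_of_ne (Nat.lt_succ_iff.mp (π i).isLt)
          (fun e => hA (Fin.ext (by simpa [Fin.last] using e)))
      exact key (π i) (π j) hpos hltα hkk p hp
  · exact le_refl _
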